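/- For every x ∈ [0,1), the series ∑_{i=1}^∞ a_i(p)·x^i converges and equals S_p(x); that is, −log((√((1−p)² + 4p(1−x)) − (1−p))/(2p)) = ∑_{i=1}^∞ [∑_{k=0}^{i−1} binom(2i−1,k)·p^k] / (i·(1+p)^{2i−1}) · x^i. -/

import Mathlib

open Real Filter

noncomputable def qp (p x : ℝ) : ℝ :=
  (Real.sqrt ((1 - p) ^ 2 + 4 * p * x) - (1 - p)) / (2 * p)

noncomputable def aCoeff (p : ℝ) (i : ℕ) : ℝ :=
  (∑ k ∈ Finset.range i, (Nat.choose (2 * i - 1) k : ℝ) * p ^ k) /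
    (i * (1 + p) ^ (2 * i - 1))

noncomputable def Gpart (p : ℝ) (N : ℕ) : ℝ := ∑ i ∈ Finset.Icc 1 N, aCoeff p i

noncomputable def Sp (p x : ℝ) : ℝ := - Real.log (qp p (1 - x))

noncomputable def rhoN (p μ : ℝ) (N : ℕ) (x : ℝ) : ℝ :=
  (μ + (∑ i ∈ Finset.Icc 1 N, aCoeff p i * x ^ i) + x ^ N) / (μ + Gpart p N + 1)

noncomputable def lamBarN (p μ : ℝ) (N : ℕ) (x : ℝ) : ℝ :=
  Real.exp (-(μ + Gpart p N + 1) * rhoN p μ N (1 - x))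

noncomputable def deSym (p μ : ℝ) (N : ℕ) (x : ℝ) : ℝ :=
  ((1 - p) + p * lamBarN p μ N x) * lamBarN p μ N x

noncomputable def cornerMap (p μ : ℝ) (N : ℕ) (α ε₁ ε₂ : ℝ) (y : ℝ) : ℝ :=
  ((1 - p) + p * Real.exp (-(α * (1 - ε₁)))) *
    Real.exp (-(α * (1 - ε₂)) * rhoN p μ N (1 - y))


section Aux
open Finset Polynomial MeasureTheory


lemma descP_smeval_succ (r : ℝ) (n : ℕ) :
    (descPochhammer ℤ (n+1)).smeval r = (descPochhammer ℤ n).smeval r * (r - n) := by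
  rw [descPochhammer_succ_right, Polynomial.smeval_mul, Polynomial.smeval_sub,
    Polynomial.smeval_X, Polynomial.smeval_natCast]
  simp

lemma descP_smeval_zero' (r : ℝ) : (descPochhammer ℤ 0).smeval r = 1 := by
  simp [descPochhammer_zero, Polynomial.smeval_one]

lemma ringChoose_eq (r : ℝ) (n : ℕ) :
    Ring.choose r n = (descPochhammer ℤ n).smeval r / n.factorial := by
  rw [eq_div_iff (by exact_mod_cast Nat.factorial_ne_zero n)]
  rw [Ring.descPochhammer_eq_factorial_smul_choose, nsmul_eq_mul]; ring

lemma ringChoose_neg_one (n : ℕ) : Ring.choose ((-1 : ℝ)) n = (-1) ^ n := by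
  have h : ∀ n : ℕ, (descPochhammer ℤ n).smeval (-1 : ℝ) = (-1)^n * n.factorial := by
    intro n
    induction n with
    | zero => simp [descP_smeval_zero']
    | succ n ih =>
      rw [descP_smeval_succ, ih, Nat.factorial_succ]
      push_cast; ring
  rw [ringChoose_eq, h, mul_div_assoc, div_self (by exact_mod_cast Nat.factorial_ne_zero n), mul_one]

lemma ringChoose_neg_half (n : ℕ) :
    Ring.choose ((-(2⁻¹) : ℝ)) n = (-(4⁻¹))^n * n.centralBinom := by
  have h : ∀ n : ℕ, (descPochhammer ℤ n).smeval (-(2⁻¹) : ℝ)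
      = (-(4⁻¹))^n * n.centralBinom * n.factorial := by
    intro n
    induction n with
    | zero => simp [descP_smeval_zero', Nat.centralBinom_zero]
    | succ n ih =>
      rw [descP_smeval_succ, ih, Nat.factorial_succ]
      have hcb : ((n+1 : ℕ) : ℝ) * (n+1).centralBinom = 2 * (2*n+1) * n.centralBinom := by
        exact_mod_cast congrArg (Nat.cast : ℕ → ℝ) (Nat.succ_mul_centralBinom_succ n)
      push_cast at hcb ⊢
      have h4 : (-(4⁻¹) : ℝ)^(n+1) = (-(4⁻¹))^n * (-(4⁻¹)) := by ring
      rw [h4]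
      linear_combination ((-(4⁻¹:ℝ))^n * (n.factorial:ℝ) / 4) * hcb
  rw [ringChoose_eq, h, mul_div_assoc, div_self (by exact_mod_cast Nat.factorial_ne_zero n), mul_one]

lemma centralBinom_conv (n : ℕ) :
    ∑ k ∈ Finset.range (n+1), ((k.centralBinom : ℝ) * ((n-k).centralBinom : ℝ)) = 4 ^ n := by
  have hv := Ring.add_choose_eq (R := ℝ) (r := -(2⁻¹)) (s := -(2⁻¹)) n (Commute.all _ _)
  rw [show (-(2⁻¹) + -(2⁻¹) : ℝ) = -1 by norm_num, ringChoose_neg_one] at hv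
  rw [Finset.Nat.sum_antidiagonal_eq_sum_range_succ (f := fun i j => Ring.choose (-(2⁻¹):ℝ) i * Ring.choose (-(2⁻¹):ℝ) j)] at hv
  simp only [ringChoose_neg_half] at hv
  have : ∀ k ∈ Finset.range (n+1), (-(4⁻¹):ℝ)^k * k.centralBinom * ((-(4⁻¹))^(n-k) * (n-k).centralBinom)
      = (-(4⁻¹))^n * (k.centralBinom * (n-k).centralBinom) := by
    intro k hk
    rw [Finset.mem_range] at hk
    rw [show (-(4⁻¹):ℝ)^k * k.centralBinom * ((-(4⁻¹))^(n-k) * (n-k).centralBinom)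
        = ((-(4⁻¹))^k * (-(4⁻¹))^(n-k)) * (k.centralBinom * (n-k).centralBinom) by ring,
      ← pow_add, Nat.add_sub_cancel' (Nat.lt_succ_iff.mp hk)]
  rw [Finset.sum_congr rfl this, ← Finset.mul_sum] at hv
  have h4 : ((-1:ℝ))^n = (-(4⁻¹))^n * 4^n := by
    rw [← mul_pow]; norm_num
  rw [h4] at hv
  have hne : ((-(4⁻¹):ℝ))^n ≠ 0 := by positivity
  exact (mul_left_cancel₀ hne hv).symm


lemma cb_le_four_pow (n : ℕ) : (n.centralBinom : ℝ) ≤ 4 ^ n := by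
  have h : n.centralBinom ≤ 4 ^ n := by
    have h1 : n.centralBinom ≤ ∑ i ∈ range (2*n+1), (2*n).choose i :=
      Finset.single_le_sum (f := fun i => (2*n).choose i) (fun i _ => Nat.zero_le _)
        (by simp [Nat.lt_succ_iff]; omega)
    rw [Nat.sum_range_choose] at h1
    calc n.centralBinom ≤ 2 ^ (2*n) := h1
    _ = 4 ^ n := by rw [pow_mul]; norm_num
  exact_mod_cast h

lemma cb_summable {u : ℝ} (hu0 : 0 ≤ u) (hu : u < 4⁻¹) :
    Summable (fun n => (n.centralBinom : ℝ) * u ^ n) := by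
  have hg : Summable (fun n : ℕ => (4*u)^n) :=
    summable_geometric_of_lt_one (by positivity) (by linarith)
  have hle : ∀ n : ℕ, (n.centralBinom : ℝ) * u ^ n ≤ (4*u)^n := by
    intro n
    rw [mul_pow]
    exact mul_le_mul_of_nonneg_right (cb_le_four_pow n) (by positivity)
  exact Summable.of_nonneg_of_le (fun n => by positivity) hle hg

lemma cb_hasSum {u : ℝ} (hu0 : 0 ≤ u) (hu : u < 4⁻¹) :
    HasSum (fun n => (n.centralBinom : ℝ) * u ^ n) (1 / Real.sqrt (1 - 4*u)) := by
  have hS := cb_summable hu0 hu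
  have hnorm : Summable (fun n => ‖(n.centralBinom : ℝ) * u ^ n‖) := by
    simpa [Real.norm_of_nonneg, abs_of_nonneg, abs_mul, abs_of_nonneg hu0,
      abs_of_nonneg (pow_nonneg hu0 _)] using hS
  set B := ∑' n, (n.centralBinom : ℝ) * u ^ n with hB
  have hprod := hasSum_sum_range_mul_of_summable_norm hnorm hnorm
  have hterm : ∀ n, (∑ k ∈ range (n+1),
      ((k.centralBinom : ℝ) * u^k) * ((n-k).centralBinom * u^(n-k))) = (4*u)^n := by
    intro n
    have : ∀ k ∈ range (n+1), ((k.centralBinom : ℝ) * u^k) * ((n-k).centralBinom * u^(n-k))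
        = ((k.centralBinom : ℝ) * (n-k).centralBinom) * u^n := by
      intro k hk
      rw [mem_range, Nat.lt_succ_iff] at hk
      rw [show ((k.centralBinom : ℝ) * u^k) * ((n-k).centralBinom * u^(n-k))
          = ((k.centralBinom : ℝ) * (n-k).centralBinom) * (u^k * u^(n-k)) by ring,
        ← pow_add, Nat.add_sub_cancel' hk]
    rw [Finset.sum_congr rfl this, ← Finset.sum_mul, centralBinom_conv, mul_pow]
  rw [funext hterm] at hprod
  have hgeo : HasSum (fun n => (4*u)^n) (1 - 4*u)⁻¹ :=
    hasSum_geometric_of_lt_one (by positivity) (by linarith)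
  have hBB : B * B = (1 - 4*u)⁻¹ := hprod.unique hgeo
  have hB1 : 1 ≤ B := by
    have := hS.hasSum
    have h0 : ((Nat.centralBinom 0 : ℝ) * u ^ 0) ≤ B := le_hasSum this 0 (fun n _ => by positivity)
    simpa [Nat.centralBinom_zero] using h0
  have hBpos : 0 < B := lt_of_lt_of_le one_pos hB1
  have hBval : B = 1 / Real.sqrt (1 - 4*u) := by
    calc B = Real.sqrt (B * B) := (Real.sqrt_mul_self hBpos.le).symm
    _ = Real.sqrt ((1 - 4*u)⁻¹) := by rw [hBB]
    _ = 1 / Real.sqrt (1 - 4*u) := by rw [Real.sqrt_inv, one_div]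
  rw [← hBval]
  exact hS.hasSum


lemma pascalF (p : ℝ) (m j : ℕ) :
    ∑ k ∈ Finset.range (j+1), ((Nat.choose (m+1) k : ℝ)) * p^k
      = ∑ k ∈ Finset.range (j+1), (Nat.choose m k : ℝ) * p^k
        + p * ∑ k ∈ Finset.range j, (Nat.choose m k : ℝ) * p^k := by
  rw [Finset.sum_range_succ' (fun k => ((Nat.choose (m+1) k : ℝ)) * p^k) j,
      Finset.sum_range_succ' (fun k => ((Nat.choose m k : ℝ)) * p^k) j,
      Finset.mul_sum]
  simp only [Nat.choose_succ_succ, Nat.cast_add, add_mul, Finset.sum_add_distrib,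
    Nat.choose_zero_right, Nat.cast_one, pow_zero, one_mul, pow_succ, Nat.succ_eq_add_one]
  have : ∀ k ∈ Finset.range j, (Nat.choose m k : ℝ) * (p^k * p) = p * ((Nat.choose m k : ℝ) * p^k) :=
    fun k _ => by ring
  rw [Finset.sum_congr rfl this]
  ring

lemma keyIdent (p : ℝ) (i : ℕ) :
    2 * ∑ k ∈ Finset.range (i+1), ((Nat.choose (2*i+1) k : ℝ)) * p^k
      = (1+p)^(2*i+1)
        + (1-p) * ∑ n ∈ Finset.range (i+1),
            ((Nat.centralBinom n : ℝ) * p^n * (1+p)^(2*(i-n))) := by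
  induction i with
  | zero =>
    simp [Nat.centralBinom_zero]
    ring
  | succ i ih =>
    have h1 := pascalF p (2*i+2) (i+1)
    have h2 := pascalF p (2*i+1) (i+1)
    have h3 := pascalF p (2*i+1) i
    have h4 := Finset.sum_range_succ (fun k => ((Nat.choose (2*i+1) k : ℝ))*p^k) (i+1)
    have h5 := Finset.sum_range_succ (fun k => ((Nat.choose (2*i+1) k : ℝ))*p^k) i
    have hstep : ∑ k ∈ Finset.range (i+1+1), ((Nat.choose (2*i+2+1) k : ℝ)) * p^k
        = (1+p)^2 * ∑ k ∈ Finset.range (i+1), ((Nat.choose (2*i+1) k : ℝ))*p^k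
          + (Nat.choose (2*i+1) (i+1) : ℝ) * p^(i+1) - (Nat.choose (2*i+1) i : ℝ) * p^(i+2) := by
      linear_combination h1 + h2 + p*h3 + h4 - p^2*h5
    have hsym : ((Nat.choose (2*i+1) (i+1) : ℝ)) = (Nat.choose (2*i+1) i : ℝ) := by
      have := Nat.choose_symm (n := 2*i+1) (k := i+1) (by omega)
      rw [show 2*i+1-(i+1) = i from by omega] at this
      exact_mod_cast this.symm
    have hcb : ((Nat.centralBinom (i+1) : ℝ)) = 2 * (Nat.choose (2*i+1) i : ℝ) := by
      have h := Nat.choose_succ_succ (2*i+1) i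
      have e : Nat.centralBinom (i+1) = Nat.choose (2*i+2) (i+1) := by
        rw [Nat.centralBinom_eq_two_mul_choose, show 2*(i+1) = 2*i+2 from by omega]
      have hsymn : Nat.choose (2*i+1) (i+1) = Nat.choose (2*i+1) i := by
        have := Nat.choose_symm (n := 2*i+1) (k := i+1) (by omega)
        rw [show 2*i+1-(i+1) = i from by omega] at this
        exact this.symm
      rw [e, show (2*i+2) = (2*i+1)+1 from by omega, h, hsymn]
      push_cast; ring
    have hsum : ∑ n ∈ Finset.range (i+1+1),
          ((Nat.centralBinom n : ℝ) * p^n * (1+p)^(2*(i+1-n)))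
        = (1+p)^2 * (∑ n ∈ Finset.range (i+1),
            ((Nat.centralBinom n : ℝ) * p^n * (1+p)^(2*(i-n))))
          + (Nat.centralBinom (i+1) : ℝ) * p^(i+1) := by
      rw [Finset.sum_range_succ]
      rw [show 2*(i+1-(i+1)) = 0 from by omega, pow_zero, mul_one]
      rw [Finset.mul_sum]
      congr 1
      apply Finset.sum_congr rfl
      intro n hn
      rw [Finset.mem_range] at hn
      rw [show 2*(i+1-n) = 2*(i-n)+2 from by omega, pow_add]
      ring
    have egoal1 : 2*(i+1)+1 = 2*i+2+1 := by ring
    have egoal2 : i+1+1 = i+2 := by ring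
    rw [show (2*(i+1)+1) = 2*i+2+1 from by ring]
    rw [show (2*(i+1)+1) = 2*i+3 from by ring] at *
    linear_combination 2*hstep + (1+p)^2*ih - (1-p)*hsum + 2*p^(i+1)*hsym - (1-p)*p^(i+1)*hcb


lemma coeff_eq {p : ℝ} (hp0 : 0 < p) (hp1 : p < 1) (i : ℕ) :
    ((i:ℝ)+1) * aCoeff p (i+1)
      = 1/2 + ((1-p)/(2*(1+p))) * ∑ n ∈ Finset.range (i+1),
          (Nat.centralBinom n : ℝ) * (p/(1+p)^2)^n := by
  have h1p : (0:ℝ) < 1+p := by linarith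
  have hkey := keyIdent p i
  have hterm : ∀ n ∈ Finset.range (i+1), (Nat.centralBinom n : ℝ) * p^n * (1+p)^(2*(i-n))
      = (1+p)^(2*i) * ((Nat.centralBinom n : ℝ) * (p/(1+p)^2)^n) := by
    intro n hn
    rw [Finset.mem_range, Nat.lt_succ_iff] at hn
    have e : (1+p)^(2*i) = (1+p)^(2*(i-n)) * ((1+p)^2)^n := by
      rw [← pow_mul, ← pow_add]; congr 1; omega
    rw [e, div_pow]
    field_simp
  rw [Finset.sum_congr rfl hterm, ← Finset.mul_sum] at hkey
  unfold aCoeff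
  rw [show 2*(i+1)-1 = 2*i+1 from by omega]
  push_cast
  have hi1 : ((i:ℝ)+1) ≠ 0 := by positivity
  have hne : ((1:ℝ)+p) ≠ 0 := ne_of_gt h1p
  have hppow : ((1:ℝ)+p)^(2*i+1) ≠ 0 := pow_ne_zero _ hne
  have hred : ((i:ℝ)+1) * ((∑ k ∈ Finset.range (i+1), ((Nat.choose (2*i+1) k : ℝ)) * p^k)
        / (((i:ℝ)+1) * (1+p)^(2*i+1)))
      = (∑ k ∈ Finset.range (i+1), ((Nat.choose (2*i+1) k : ℝ)) * p^k) / (1+p)^(2*i+1) := by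
    rw [mul_div_assoc', div_eq_div_iff (by positivity) hppow]
    ring
  rw [hred, div_eq_iff hppow]
  simp only [div_pow, ← mul_div_assoc] at hkey ⊢
  field_simp
  linear_combination (1+p)*hkey

lemma hasSum_deriv {p : ℝ} (hp0 : 0 < p) (hp1 : p < 1) {t : ℝ} (ht0 : 0 ≤ t) (ht1 : t < 1) :
    HasSum (fun i : ℕ => (((i:ℝ)+1) * aCoeff p (i+1)) * t^i)
      (1/(2*(1-t)) + (1-p)/(2*(1-t)*Real.sqrt ((1+p)^2 - 4*p*t))) := by
  have h1p : (0:ℝ) < 1+p := by linarith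
  have h1t : (0:ℝ) < 1-t := by linarith
  set v : ℝ := p/(1+p)^2 with hv
  have hv0 : 0 ≤ v := by positivity
  have hDpos : (0:ℝ) < (1+p)^2 - 4*p*t := by nlinarith
  have hu0 : 0 ≤ v*t := by positivity
  have hu4 : v*t < 4⁻¹ := by
    rw [hv, div_mul_eq_mul_div, div_lt_iff₀ (by positivity)]
    nlinarith
  have hcb := cb_hasSum hu0 hu4
  have hsqrt : Real.sqrt (1 - 4*(v*t)) = Real.sqrt ((1+p)^2 - 4*p*t) / (1+p) := by
    have e : 1 - 4*(v*t) = ((1+p)^2 - 4*p*t)/((1+p)^2) := by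
      rw [hv]; field_simp
    rw [e, Real.sqrt_div hDpos.le, Real.sqrt_sq h1p.le]
  rw [hsqrt, one_div_div] at hcb
  have hcb' : HasSum (fun n => ((Nat.centralBinom n : ℝ) * v^n) * t^n)
      ((1+p) / Real.sqrt ((1+p)^2 - 4*p*t)) := by
    simpa [mul_pow, mul_assoc] using hcb
  have hsD : Real.sqrt ((1+p)^2 - 4*p*t) ≠ 0 := ne_of_gt (Real.sqrt_pos.mpr hDpos)
  have hgeo : HasSum (fun n : ℕ => t^n) ((1-t)⁻¹) := hasSum_geometric_of_lt_one ht0 ht1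
  have hnorm1 : Summable (fun n => ‖((Nat.centralBinom n : ℝ) * v^n) * t^n‖) := by
    have he : ∀ n : ℕ, ‖((Nat.centralBinom n : ℝ) * v^n) * t^n‖
        = ((Nat.centralBinom n : ℝ) * v^n) * t^n := fun n => Real.norm_of_nonneg (by positivity)
    rw [funext he]
    exact hcb'.summable
  have hnorm2 : Summable (fun n : ℕ => ‖t^n‖) := by
    have he : ∀ n : ℕ, ‖t^n‖ = t^n := fun n => Real.norm_of_nonneg (by positivity)
    rw [funext he]
    exact hgeo.summable
  have hprod := hasSum_sum_range_mul_of_summable_norm hnorm1 hnorm2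
  rw [hcb'.tsum_eq, hgeo.tsum_eq] at hprod
  have hterm : ∀ m : ℕ, ∑ k ∈ Finset.range (m+1),
        (((Nat.centralBinom k : ℝ) * v^k) * t^k) * t^(m-k)
      = (∑ k ∈ Finset.range (m+1), (Nat.centralBinom k : ℝ) * v^k) * t^m := by
    intro m
    rw [Finset.sum_mul]
    apply Finset.sum_congr rfl
    intro k hk
    rw [Finset.mem_range, Nat.lt_succ_iff] at hk
    rw [mul_assoc, ← pow_add, Nat.add_sub_cancel' hk]
  rw [funext hterm] at hprod
  have hhalf := hgeo.mul_left (1/2)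
  have hc := hprod.mul_left ((1-p)/(2*(1+p)))
  have hsum := hhalf.add hc
  have hfun : ∀ i : ℕ, (((i:ℝ)+1) * aCoeff p (i+1)) * t^i
      = (1/2)*t^i + ((1-p)/(2*(1+p))) * ((∑ k ∈ Finset.range (i+1),
          (Nat.centralBinom k : ℝ) * v^k) * t^i) := by
    intro i
    rw [coeff_eq hp0 hp1 i]
    rw [hv]
    ring
  rw [funext hfun]
  have hval : 1/(2*(1-t)) + (1-p)/(2*(1-t)*Real.sqrt ((1+p)^2 - 4*p*t))
      = (1/2)*(1-t)⁻¹ + ((1-p)/(2*(1+p))) * ((1+p) / Real.sqrt ((1+p)^2 - 4*p*t) * (1-t)⁻¹) := by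
    field_simp
  rw [hval]
  exact hsum


lemma hasDerivAt_Sp {p : ℝ} (hp0 : 0 < p) (hp1 : p < 1) {t : ℝ} (ht1 : t < 1) :
    HasDerivAt (Sp p)
      (1/(2*(1-t)) + (1-p)/(2*(1-t)*Real.sqrt ((1+p)^2 - 4*p*t))) t := by
  have h1t : (0:ℝ) < 1 - t := by linarith
  have hDt : (0:ℝ) < (1-p)^2 + 4*p*(1-t) := by positivity
  set s := Real.sqrt ((1-p)^2 + 4*p*(1-t)) with hs
  have hs2 : s^2 = (1-p)^2 + 4*p*(1-t) := Real.sq_sqrt hDt.le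
  have hspos : 0 < s := Real.sqrt_pos.mpr hDt
  have hsgt : 1 - p < s := by nlinarith
  have hqpos : 0 < (s - (1-p))/(2*p) := by
    apply div_pos (by linarith) (by linarith)
  have hinner : HasDerivAt (fun x : ℝ => (1-p)^2 + 4*p*(1-x)) (-(4*p)) t := by
    have h1 : HasDerivAt (fun x : ℝ => 1 - x) (-1) t := (hasDerivAt_id t).const_sub 1
    have h2 := h1.const_mul (4*p)
    have h3 := h2.const_add ((1-p)^2)
    simpa using h3
  have hsqrt := hinner.sqrt (ne_of_gt hDt)
  have hq : HasDerivAt (fun x : ℝ => (Real.sqrt ((1-p)^2 + 4*p*(1-x)) - (1-p))/(2*p))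
      ((-(4*p) / (2*s))/(2*p)) t := (hsqrt.sub_const (1-p)).div_const (2*p)
  have hlog := (hq.log (ne_of_gt hqpos)).neg
  have hSp : HasDerivAt (Sp p) (-((-(4*p) / (2*s))/(2*p) / ((s - (1-p))/(2*p)))) t := hlog
  rw [show (1+p)^2 - 4*p*t = (1-p)^2 + 4*p*(1-t) from by ring]
  convert hSp using 1
  have hsne : s ≠ 0 := ne_of_gt hspos
  have hsd : s - (1-p) ≠ 0 := by linarith
  have h1tne : (1:ℝ) - t ≠ 0 := ne_of_gt h1t
  have hpne : p ≠ 0 := ne_of_gt hp0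
  rw [← hs]
  field_simp
  linear_combination hs2


lemma Sp_zero {p : ℝ} (hp0 : 0 < p) (hp1 : p < 1) : Sp p 0 = 0 := by
  have h : qp p 1 = 1 := by
    unfold qp
    rw [show (1-p)^2 + 4*p*1 = (1+p)^2 from by ring, Real.sqrt_sq (by linarith)]
    field_simp
    ring
  unfold Sp
  rw [show (1:ℝ) - 0 = 1 from by ring, h, Real.log_one, neg_zero]

lemma aCoeff_nonneg {p : ℝ} (hp0 : 0 < p) (i : ℕ) : 0 ≤ aCoeff p (i+1) := by
  unfold aCoeff
  have h1p : (0:ℝ) < 1 + p := by linarith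
  apply div_nonneg
  · apply Finset.sum_nonneg
    intro k _
    positivity
  · positivity

lemma aCoeff_le_one {p : ℝ} (hp0 : 0 < p) (i : ℕ) : aCoeff p (i+1) ≤ 1 := by
  unfold aCoeff
  have h1p : (0:ℝ) < 1 + p := by linarith
  rw [div_le_one (by positivity)]
  have h1 : ∑ k ∈ Finset.range (i+1), (Nat.choose (2*(i+1)-1) k : ℝ) * p ^ k
      ≤ ∑ k ∈ Finset.range (2*(i+1)-1+1), (Nat.choose (2*(i+1)-1) k : ℝ) * p ^ k := by
    apply Finset.sum_le_sum_of_subset_of_nonneg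
    · apply Finset.range_subset_range.mpr; omega
    · intro k _ _; positivity
  have h2 : ∑ k ∈ Finset.range (2*(i+1)-1+1), (Nat.choose (2*(i+1)-1) k : ℝ) * p ^ k
      = (1+p)^(2*(i+1)-1) := by
    rw [add_comm (1:ℝ) p, add_pow]
    apply Finset.sum_congr rfl
    intro k _
    rw [one_pow]
    ring
  calc ∑ k ∈ Finset.range (i+1), (Nat.choose (2*(i+1)-1) k : ℝ) * p ^ k
      ≤ (1+p)^(2*(i+1)-1) := h1.trans (le_of_eq h2)
    _ ≤ ((i:ℝ)+1) * (1+p)^(2*(i+1)-1) := by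
        apply le_mul_of_one_le_left (by positivity)
        exact_mod_cast Nat.one_le_iff_ne_zero.mpr (by omega)
    _ = (((i+1:ℕ)):ℝ) * (1+p)^(2*(i+1)-1) := by push_cast; ring

theorem stmt3 (p : ℝ) (hp0 : 0 < p) (hp1 : p < 1) :
    ∀ x : ℝ, 0 ≤ x → x < 1 →
      HasSum (fun i : ℕ => aCoeff p (i + 1) * x ^ (i + 1)) (Sp p x) := by
  intro x hx0 hx1
  have h1p : (0:ℝ) < 1 + p := by linarith
  set g : ℝ → ℝ := fun t => 1/(2*(1-t)) + (1-p)/(2*(1-t)*Real.sqrt ((1+p)^2 - 4*p*t)) with hg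
  have hgcont : ContinuousOn g (Set.uIcc 0 x) := by
    rw [Set.uIcc_of_le hx0]
    have hfacts : ∀ t ∈ Set.Icc (0:ℝ) x, (0:ℝ) < 1 - t ∧ 0 < (1+p)^2 - 4*p*t := by
      intro t ht
      have h1 : t < 1 := lt_of_le_of_lt ht.2 hx1
      constructor
      · linarith
      · nlinarith
    apply ContinuousOn.add
    · apply ContinuousOn.div continuousOn_const (by fun_prop)
      intro t ht
      have := (hfacts t ht).1
      positivity
    · apply ContinuousOn.div continuousOn_const
      · apply ContinuousOn.mul (by fun_prop)
        apply Continuous.continuousOn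
        exact (continuous_const.sub (continuous_const.mul continuous_id')).sqrt
      · intro t ht
        obtain ⟨h1, h2⟩ := hfacts t ht
        have hs : 0 < Real.sqrt ((1+p)^2 - 4*p*t) := Real.sqrt_pos.mpr h2
        positivity
  have hderiv : ∀ t ∈ Set.uIcc 0 x, HasDerivAt (Sp p) (g t) t := by
    intro t ht
    rw [Set.uIcc_of_le hx0] at ht
    exact hasDerivAt_Sp hp0 hp1 (lt_of_le_of_lt ht.2 hx1)
  have hInt : IntervalIntegrable g MeasureTheory.volume 0 x := hgcont.intervalIntegrable
  have hFTC := intervalIntegral.integral_eq_sub_of_hasDerivAt hderiv hInt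
  rw [Sp_zero hp0 hp1, sub_zero] at hFTC
  set F : ℕ → ℝ → ℝ := fun i t => (((i:ℝ)+1) * aCoeff p (i+1)) * t^i with hF
  have hFcont : ∀ i, Continuous (F i) := fun i => by
    rw [hF]; fun_prop
  have hFint : ∀ i, MeasureTheory.Integrable (F i) (volume.restrict (Set.Ioc 0 x)) :=
    fun i => (hFcont i).integrableOn_Ioc
  have hFval : ∀ i, ∫ t in Set.Ioc 0 x, F i t = aCoeff p (i+1) * x^(i+1) := by
    intro i
    rw [← intervalIntegral.integral_of_le hx0]
    rw [hF]
    simp only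
    rw [intervalIntegral.integral_const_mul, integral_pow]
    rw [zero_pow (by omega)]
    field_simp
    ring
  have hFnn : ∀ i, ∀ t ∈ Set.Ioc (0:ℝ) x, 0 ≤ F i t := by
    intro i t ht
    have h1 := aCoeff_nonneg hp0 i
    have h2 : (0:ℝ) ≤ t := le_of_lt ht.1
    rw [hF]
    positivity
  have hnormsum : Summable (fun i => ∫ t in Set.Ioc 0 x, ‖F i t‖) := by
    have he : (fun i => ∫ t in Set.Ioc 0 x, ‖F i t‖)
        = fun i => aCoeff p (i+1) * x^(i+1) := by
      funext i
      rw [← hFval i]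
      apply MeasureTheory.setIntegral_congr_fun measurableSet_Ioc
      intro t ht
      exact Real.norm_of_nonneg (hFnn i t ht)
    rw [he]
    apply Summable.of_nonneg_of_le
      (fun i => mul_nonneg (aCoeff_nonneg hp0 i) (by positivity))
      (fun i => ?_) ((summable_geometric_of_lt_one hx0 hx1).mul_left x)
    calc aCoeff p (i+1) * x^(i+1) ≤ 1 * x^(i+1) :=
          mul_le_mul_of_nonneg_right (aCoeff_le_one hp0 i) (by positivity)
      _ = x * x^i := by rw [one_mul, pow_succ]; ring
  have hswap := MeasureTheory.hasSum_integral_of_summable_integral_norm hFint hnormsum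
  have htsum_eq : ∫ t in Set.Ioc 0 x, (∑' i, F i t) = Sp p x := by
    rw [← hFTC, intervalIntegral.integral_of_le hx0]
    apply MeasureTheory.setIntegral_congr_fun measurableSet_Ioc
    intro t ht
    exact (hasSum_deriv hp0 hp1 (le_of_lt ht.1) (lt_of_le_of_lt ht.2 hx1)).tsum_eq
  rw [htsum_eq] at hswap
  have hfun : (fun i => ∫ t in Set.Ioc 0 x, F i t) = fun i => aCoeff p (i+1) * x^(i+1) :=
    funext hFval
  rw [hfun] at hswap
  exact hswap

end Aux
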